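/- (Perturbative expansion of correlation functions in the coupling parameters.) With the setup of the {v,h}⁴-theory: M > 0, ν a finite Borel measure on L²(ℤ_p^N) × L²(ℤ_p^N) carried by B^∞_M × B^∞_M, a, b ∈ L^∞(ℤ_p^N), w ∈ L^∞(ℤ_p^N × ℤ_p^N), E^spin(v,h) = −⟨h, Wv⟩ − ⟨a, v⟩ − ⟨b, h⟩, U(v) = ∫ v⁴ dμ, V(h) = ∫ h⁴ dμ, and c, d ∈ ℝ. Then for all m, n ≥ 0 and φ_1, …, φ_m, θ_1, …, θ_n ∈ L²(ℤ_p^N), the iterated partial derivative ∂_{t_n} ⋯ ∂_{t_1} ∂_{s_m} ⋯ ∂_{s_1}, at (s,t) = (0,0), of (s,t) ↦ ∫ exp(−E^spin(v,h) − c U(v) − d V(h) + Σ_i s_i ⟨φ_i, v⟩ + Σ_j t_j ⟨θ_j, h⟩) dν(v,h) exists and equals Σ_{i=0}^∞ Σ_{j=0}^∞ ((−1)^{i+j} c^i d^j / (i! j!)) ∫ ∏_{k=1}^m ⟨φ_k, v⟩ ∏_{l=1}^n ⟨θ_l, h⟩ U(v)^i V(h)^j exp(−E^spin(v,h)) dν(v,h),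 the double series converging absolutely. -/

import Mathlib

open MeasureTheory ENNReal Real

/-- The space `ℤ_p^N`. -/
abbrev PSpace (p : ℕ) [Fact p.Prime] (N : ℕ) := Fin N → ℤ_[p]

/-- The spin-glass energy `E^spin(v,h) = −⟨h, Wv⟩ − ⟨a, v⟩ − ⟨b, h⟩`. -/
noncomputable def espin {p : ℕ} [Fact p.Prime] {N : ℕ}
    [MeasurableSpace (PSpace p N)] (μ : Measure (PSpace p N))
    (a b : PSpace p N → ℝ) (w : PSpace p N × PSpace p N → ℝ)
    (v h : PSpace p N → ℝ) : ℝ :=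
  -(∫ x, h x * (∫ y, w (x, y) * v y ∂μ) ∂μ) - (∫ x, a x * v x ∂μ) - ∫ x, b x * h x ∂μ

/-- The quartic self-interaction `U(v) = ∫ v(x)⁴ dμ(x)`. -/
noncomputable def quart {p : ℕ} [Fact p.Prime] {N : ℕ}
    [MeasurableSpace (PSpace p N)] (μ : Measure (PSpace p N))
    (v : PSpace p N → ℝ) : ℝ :=
  ∫ x, v x ^ 4 ∂μ

/-- Partial derivative in the `i`-th coordinate of the first block of variables. -/
noncomputable def pdFst {m n : ℕ} (i : Fin m) (F : (Fin m → ℝ) × (Fin n → ℝ) → ℝ) :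
    (Fin m → ℝ) × (Fin n → ℝ) → ℝ :=
  fun st => deriv (fun r => F (Function.update st.1 i r, st.2)) (st.1 i)

/-- Partial derivative in the `j`-th coordinate of the second block of variables. -/
noncomputable def pdSnd {m n : ℕ} (j : Fin n) (F : (Fin m → ℝ) × (Fin n → ℝ) → ℝ) :
    (Fin m → ℝ) × (Fin n → ℝ) → ℝ :=
  fun st => deriv (fun r => F (st.1, Function.update st.2 j r)) (st.2 j)

/-- The iterated partial derivative `∂_{t_n} ⋯ ∂_{t_1} ∂_{s_m} ⋯ ∂_{s_1} F`. -/
noncomputable def iterPD2 {m n : ℕ} (F : (Fin m → ℝ) × (Fin n → ℝ) → ℝ) :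
    (Fin m → ℝ) × (Fin n → ℝ) → ℝ :=
  (List.finRange n).foldl (fun G j => pdSnd j G)
    ((List.finRange m).foldl (fun G i => pdFst i G) F)

section Abstract
set_option linter.unusedSectionVars false


lemma aux_hasDerivAt_integral {Ω : Type*} [MeasurableSpace Ω] {ν : Measure Ω} [IsFiniteMeasure ν] (Q C A' : Ω → ℝ) (c₀ c₁ c₂ : ℝ)
    (hQm : AEStronglyMeasurable Q ν) (hCm : AEStronglyMeasurable C ν)
    (hAm : AEStronglyMeasurable A' ν)
    (hQ : ∀ᵐ f ∂ν, |Q f| ≤ c₀) (hC : ∀ᵐ f ∂ν, |C f| ≤ c₁) (hA : ∀ᵐ f ∂ν, |A' f| ≤ c₂)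
    (r₀ : ℝ) :
    HasDerivAt (fun r => ∫ f, Q f * Real.exp (C f + r * A' f) ∂ν)
      (∫ f, Q f * A' f * Real.exp (C f + r₀ * A' f) ∂ν) r₀ := by
  have hFm : ∀ r : ℝ, AEStronglyMeasurable (fun f => Q f * Real.exp (C f + r * A' f)) ν :=
    fun r => hQm.mul (Real.continuous_exp.comp_aestronglyMeasurable
      (hCm.add (hAm.const_mul r)))
  have hF'm : ∀ r : ℝ, AEStronglyMeasurable (fun f => Q f * A' f * Real.exp (C f + r * A' f)) ν :=
    fun r => (hQm.mul hAm).mul (Real.continuous_exp.comp_aestronglyMeasurable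
      (hCm.add (hAm.const_mul r)))
  have key := hasDerivAt_integral_of_dominated_loc_of_deriv_le (μ := ν) (𝕜 := ℝ)
    (F := fun r f => Q f * Real.exp (C f + r * A' f))
    (F' := fun r f => Q f * A' f * Real.exp (C f + r * A' f))
    (x₀ := r₀) (s := Metric.ball r₀ 1)
    (bound := fun _ => c₀ * (c₂ * Real.exp (c₁ + (|r₀| + 1) * c₂))) (Metric.ball_mem_nhds r₀ one_pos)
    (Filter.Eventually.of_forall hFm) ?_ (hF'm r₀) ?_ (integrable_const _) ?_
  · exact key.2
  · refine Integrable.mono' (integrable_const (c₀ * Real.exp (c₁ + |r₀| * c₂)))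
      (hFm r₀) ?_
    filter_upwards [hQ, hC, hA] with f h1 h2 h3
    have he : Real.exp (C f + r₀ * A' f) ≤ Real.exp (c₁ + |r₀| * c₂) := by
      apply Real.exp_le_exp.2
      have : r₀ * A' f ≤ |r₀| * c₂ := by
        calc r₀ * A' f ≤ |r₀ * A' f| := le_abs_self _
        _ = |r₀| * |A' f| := abs_mul _ _
        _ ≤ |r₀| * c₂ := by
            exact mul_le_mul_of_nonneg_left h3 (abs_nonneg _)
      linarith [(abs_le.1 h2).2]
    calc ‖Q f * Real.exp (C f + r₀ * A' f)‖ = |Q f| * Real.exp (C f + r₀ * A' f) := by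
          rw [norm_mul, Real.norm_eq_abs, Real.norm_eq_abs, abs_of_pos (Real.exp_pos _)]
      _ ≤ c₀ * Real.exp (c₁ + |r₀| * c₂) := by
          exact mul_le_mul h1 he (Real.exp_pos _).le ((abs_nonneg _).trans h1)
  · filter_upwards [hQ, hC, hA] with f h1 h2 h3
    intro r hr
    have hrb : |r| ≤ |r₀| + 1 := by
      have := mem_ball_iff_norm.1 hr
      rw [Real.norm_eq_abs] at this
      calc |r| = |r₀ + (r - r₀)| := by ring_nf
        _ ≤ |r₀| + |r - r₀| := abs_add_le _ _
        _ ≤ |r₀| + 1 := by linarith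
    have hc₂ : 0 ≤ c₂ := (abs_nonneg _).trans h3
    have he : Real.exp (C f + r * A' f) ≤ Real.exp (c₁ + (|r₀| + 1) * c₂) := by
      apply Real.exp_le_exp.2
      have : r * A' f ≤ (|r₀| + 1) * c₂ := by
        calc r * A' f ≤ |r * A' f| := le_abs_self _
          _ = |r| * |A' f| := abs_mul _ _
          _ ≤ (|r₀| + 1) * c₂ := by
              exact mul_le_mul hrb h3 (abs_nonneg _) (by positivity)
      linarith [(abs_le.1 h2).2]
    calc ‖Q f * A' f * Real.exp (C f + r * A' f)‖
        = |Q f| * |A' f| * Real.exp (C f + r * A' f) := by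
          rw [norm_mul, norm_mul, Real.norm_eq_abs, Real.norm_eq_abs, Real.norm_eq_abs,
            abs_of_pos (Real.exp_pos _)]
      _ ≤ c₀ * (c₂ * Real.exp (c₁ + (|r₀| + 1) * c₂)) := by
          rw [← mul_assoc]
          refine mul_le_mul ?_ he (Real.exp_pos _).le ?_
          · exact mul_le_mul h1 h3 (abs_nonneg _) ((abs_nonneg _).trans h1)
          · exact mul_nonneg ((abs_nonneg _).trans h1) hc₂
  · refine Filter.Eventually.of_forall fun f => ?_
    intro r _
    have h1 : HasDerivAt (fun r : ℝ => C f + r * A' f) (A' f) r := by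
      simpa using (hasDerivAt_mul_const (A' f) (x := r)).const_add (C f)
    have h2 := (h1.exp).const_mul (Q f)
    refine h2.congr_deriv ?_
    ring



lemma pdFst_integral_exp {Ω : Type*} [MeasurableSpace Ω] {ν : Measure Ω} [IsFiniteMeasure ν] {m n : ℕ}
    (E : Ω → ℝ) (α : Fin m → Ω → ℝ) (β : Fin n → Ω → ℝ)
    (Q : Ω → ℝ) (K A B c₀ : ℝ)
    (hEm : AEStronglyMeasurable E ν) (hαm : ∀ k, AEStronglyMeasurable (α k) ν)
    (hβm : ∀ l, AEStronglyMeasurable (β l) ν) (hQm : AEStronglyMeasurable Q ν)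
    (hE : ∀ᵐ f ∂ν, |E f| ≤ K) (hα : ∀ᵐ f ∂ν, ∀ k, |α k f| ≤ A)
    (hβ : ∀ᵐ f ∂ν, ∀ l, |β l f| ≤ B) (hQ : ∀ᵐ f ∂ν, |Q f| ≤ c₀) (i : Fin m) :
    pdFst i (fun st : (Fin m → ℝ) × (Fin n → ℝ) => ∫ f, Q f *
        Real.exp (E f + (∑ k, st.1 k * α k f) + ∑ l, st.2 l * β l f) ∂ν)
      = fun st => ∫ f, (Q f * α i f) *
        Real.exp (E f + (∑ k, st.1 k * α k f) + ∑ l, st.2 l * β l f) ∂ν := by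
  classical
  funext st
  set C : Ω → ℝ := fun f =>
    E f + (∑ k ∈ Finset.univ.erase i, st.1 k * α k f) + ∑ l, st.2 l * β l f with hCdef
  have hsum : ∀ (r : ℝ) (f : Ω),
      E f + (∑ k, (Function.update st.1 i r) k * α k f) + (∑ l, st.2 l * β l f)
        = C f + r * α i f := by
    intro r f
    have h1 : (∑ k, (Function.update st.1 i r) k * α k f)
        = r * α i f + ∑ k ∈ Finset.univ.erase i, st.1 k * α k f := by
      rw [← Finset.add_sum_erase _ _ (Finset.mem_univ i), Function.update_self]
      congr 1
      refine Finset.sum_congr rfl fun k hk => ?_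
      rw [Function.update_of_ne (Finset.ne_of_mem_erase hk)]
    rw [h1, hCdef]; ring
  have hCm : AEStronglyMeasurable C ν := by
    refine (hEm.add ?_).add ?_
    · exact Finset.aestronglyMeasurable_fun_sum _ fun k _ => (hαm k).const_mul _
    · exact Finset.aestronglyMeasurable_fun_sum _ fun l _ => (hβm l).const_mul _
  set c₁ : ℝ := K + (∑ k ∈ Finset.univ.erase i, |st.1 k|) * A + (∑ l, |st.2 l|) * B with hc₁
  have hC : ∀ᵐ f ∂ν, |C f| ≤ c₁ := by
    filter_upwards [hE, hα, hβ] with f h1 h2 h3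
    have hA0 : 0 ≤ A := (abs_nonneg _).trans (h2 i)
    have hs1 : |∑ k ∈ Finset.univ.erase i, st.1 k * α k f|
        ≤ (∑ k ∈ Finset.univ.erase i, |st.1 k|) * A := by
      calc |∑ k ∈ Finset.univ.erase i, st.1 k * α k f|
          ≤ ∑ k ∈ Finset.univ.erase i, |st.1 k * α k f| := Finset.abs_sum_le_sum_abs _ _
        _ ≤ ∑ k ∈ Finset.univ.erase i, |st.1 k| * A := by
            refine Finset.sum_le_sum fun k _ => ?_
            rw [abs_mul]
            exact mul_le_mul_of_nonneg_left (h2 k) (abs_nonneg _)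
        _ = (∑ k ∈ Finset.univ.erase i, |st.1 k|) * A := (Finset.sum_mul _ _ _).symm
    have hs2 : |∑ l, st.2 l * β l f| ≤ (∑ l, |st.2 l|) * B := by
      rcases isEmpty_or_nonempty (Fin n) with h | h
      · simp
      · have hB0 : 0 ≤ B := (abs_nonneg _).trans (h3 (Classical.arbitrary _))
        calc |∑ l, st.2 l * β l f| ≤ ∑ l, |st.2 l * β l f| := Finset.abs_sum_le_sum_abs _ _
          _ ≤ ∑ l, |st.2 l| * B := by
              refine Finset.sum_le_sum fun l _ => ?_
              rw [abs_mul]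
              exact mul_le_mul_of_nonneg_left (h3 l) (abs_nonneg _)
          _ = (∑ l, |st.2 l|) * B := (Finset.sum_mul _ _ _).symm
    calc |C f| ≤ |E f + ∑ k ∈ Finset.univ.erase i, st.1 k * α k f|
          + |∑ l, st.2 l * β l f| := abs_add_le _ _
      _ ≤ |E f| + |∑ k ∈ Finset.univ.erase i, st.1 k * α k f|
          + |∑ l, st.2 l * β l f| := by linarith [abs_add_le (E f) (∑ k ∈ Finset.univ.erase i, st.1 k * α k f)]
      _ ≤ c₁ := by rw [hc₁]; linarith
  have heq : (fun r => ∫ f, Q f *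
        Real.exp (E f + (∑ k, (Function.update st.1 i r) k * α k f)
          + ∑ l, st.2 l * β l f) ∂ν)
      = fun r => ∫ f, Q f * Real.exp (C f + r * α i f) ∂ν := by
    funext r
    congr 1
    funext f
    rw [hsum]
  have hd := aux_hasDerivAt_integral Q C (α i) c₀ c₁ A hQm hCm (hαm i) hQ hC
    (hα.mono fun f hf => hf i) (st.1 i)
  show deriv (fun r => ∫ f, Q f *
      Real.exp (E f + (∑ k, (Function.update st.1 i r) k * α k f)
        + ∑ l, st.2 l * β l f) ∂ν) (st.1 i) = _
  rw [heq, hd.deriv]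
  congr 1
  funext f
  rw [mul_assoc, ← hsum (st.1 i) f, Function.update_eq_self, ← mul_assoc]

end Abstract

set_option linter.unusedSectionVars false

lemma pdSnd_integral_exp {Ω : Type*} [MeasurableSpace Ω] {ν : Measure Ω} [IsFiniteMeasure ν] {m n : ℕ}
    (E : Ω → ℝ) (α : Fin m → Ω → ℝ) (β : Fin n → Ω → ℝ)
    (Q : Ω → ℝ) (K A B c₀ : ℝ)
    (hEm : AEStronglyMeasurable E ν) (hαm : ∀ k, AEStronglyMeasurable (α k) ν)
    (hβm : ∀ l, AEStronglyMeasurable (β l) ν) (hQm : AEStronglyMeasurable Q ν)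
    (hE : ∀ᵐ f ∂ν, |E f| ≤ K) (hα : ∀ᵐ f ∂ν, ∀ k, |α k f| ≤ A)
    (hβ : ∀ᵐ f ∂ν, ∀ l, |β l f| ≤ B) (hQ : ∀ᵐ f ∂ν, |Q f| ≤ c₀) (j : Fin n) :
    pdSnd j (fun st : (Fin m → ℝ) × (Fin n → ℝ) => ∫ f, Q f *
        Real.exp (E f + (∑ k, st.1 k * α k f) + ∑ l, st.2 l * β l f) ∂ν)
      = fun st => ∫ f, (Q f * β j f) *
        Real.exp (E f + (∑ k, st.1 k * α k f) + ∑ l, st.2 l * β l f) ∂ν := by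
  classical
  funext st
  set C : Ω → ℝ := fun f =>
    E f + (∑ k, st.1 k * α k f) + ∑ l ∈ Finset.univ.erase j, st.2 l * β l f with hCdef
  have hsum : ∀ (r : ℝ) (f : Ω),
      E f + (∑ k, st.1 k * α k f) + (∑ l, (Function.update st.2 j r) l * β l f)
        = C f + r * β j f := by
    intro r f
    have h1 : (∑ l, (Function.update st.2 j r) l * β l f)
        = r * β j f + ∑ l ∈ Finset.univ.erase j, st.2 l * β l f := by
      rw [← Finset.add_sum_erase _ _ (Finset.mem_univ j), Function.update_self]
      congr 1
      refine Finset.sum_congr rfl fun l hl => ?_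
      rw [Function.update_of_ne (Finset.ne_of_mem_erase hl)]
    rw [h1, hCdef]; ring
  have hCm : AEStronglyMeasurable C ν := by
    refine (hEm.add ?_).add ?_
    · exact Finset.aestronglyMeasurable_fun_sum _ fun k _ => (hαm k).const_mul _
    · exact Finset.aestronglyMeasurable_fun_sum _ fun l _ => (hβm l).const_mul _
  set c₁ : ℝ := K + (∑ k, |st.1 k|) * A + (∑ l ∈ Finset.univ.erase j, |st.2 l|) * B with hc₁
  have hC : ∀ᵐ f ∂ν, |C f| ≤ c₁ := by
    filter_upwards [hE, hα, hβ] with f h1 h2 h3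
    have hB0 : 0 ≤ B := (abs_nonneg _).trans (h3 j)
    have hs2 : |∑ l ∈ Finset.univ.erase j, st.2 l * β l f|
        ≤ (∑ l ∈ Finset.univ.erase j, |st.2 l|) * B := by
      calc |∑ l ∈ Finset.univ.erase j, st.2 l * β l f|
          ≤ ∑ l ∈ Finset.univ.erase j, |st.2 l * β l f| := Finset.abs_sum_le_sum_abs _ _
        _ ≤ ∑ l ∈ Finset.univ.erase j, |st.2 l| * B := by
            refine Finset.sum_le_sum fun l _ => ?_
            rw [abs_mul]
            exact mul_le_mul_of_nonneg_left (h3 l) (abs_nonneg _)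
        _ = _ := (Finset.sum_mul _ _ _).symm
    have hs1 : |∑ k, st.1 k * α k f| ≤ (∑ k, |st.1 k|) * A := by
      rcases isEmpty_or_nonempty (Fin m) with h | h
      · simp
      · have hA0 : 0 ≤ A := (abs_nonneg _).trans (h2 (Classical.arbitrary _))
        calc |∑ k, st.1 k * α k f| ≤ ∑ k, |st.1 k * α k f| := Finset.abs_sum_le_sum_abs _ _
          _ ≤ ∑ k, |st.1 k| * A := by
              refine Finset.sum_le_sum fun k _ => ?_
              rw [abs_mul]
              exact mul_le_mul_of_nonneg_left (h2 k) (abs_nonneg _)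
          _ = _ := (Finset.sum_mul _ _ _).symm
    calc |C f| ≤ |E f + ∑ k, st.1 k * α k f|
          + |∑ l ∈ Finset.univ.erase j, st.2 l * β l f| := abs_add_le _ _
      _ ≤ |E f| + |∑ k, st.1 k * α k f|
          + |∑ l ∈ Finset.univ.erase j, st.2 l * β l f| := by
            linarith [abs_add_le (E f) (∑ k, st.1 k * α k f)]
      _ ≤ c₁ := by rw [hc₁]; linarith
  have heq : (fun r => ∫ f, Q f *
        Real.exp (E f + (∑ k, st.1 k * α k f)
          + ∑ l, (Function.update st.2 j r) l * β l f) ∂ν)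
      = fun r => ∫ f, Q f * Real.exp (C f + r * β j f) ∂ν := by
    funext r
    congr 1
    funext f
    rw [hsum]
  have hd := aux_hasDerivAt_integral Q C (β j) c₀ c₁ B hQm hCm (hβm j) hQ hC
    (hβ.mono fun f hf => hf j) (st.2 j)
  show deriv (fun r => ∫ f, Q f *
      Real.exp (E f + (∑ k, st.1 k * α k f)
        + ∑ l, (Function.update st.2 j r) l * β l f) ∂ν) (st.2 j) = _
  rw [heq, hd.deriv]
  congr 1
  funext f
  rw [mul_assoc, ← hsum (st.2 j) f, Function.update_eq_self, ← mul_assoc]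

lemma list_prod_abs_le {ι : Type*} (g : ι → ℝ) (A : ℝ) (h : ∀ k, |g k| ≤ A) :
    ∀ L : List ι, |(L.map g).prod| ≤ |A| ^ L.length := by
  intro L
  induction L with
  | nil => simp
  | cons i L ih =>
    rw [List.map_cons, List.prod_cons, List.length_cons, abs_mul, pow_succ, mul_comm (|A| ^ L.length)]
    exact mul_le_mul ((h i).trans (le_abs_self A)) ih (abs_nonneg _) (abs_nonneg _)

lemma list_prod_aesm {Ω : Type*} [MeasurableSpace Ω] {ν : Measure Ω} {ι : Type*} (α : ι → Ω → ℝ) (hαm : ∀ k, AEStronglyMeasurable (α k) ν) :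
    ∀ L : List ι, AEStronglyMeasurable (fun f => (L.map (fun i => α i f)).prod) ν := by
  intro L
  induction L with
  | nil => simpa using aestronglyMeasurable_const
  | cons i L ih => simpa using (hαm i).fun_mul ih

lemma foldl_pdFst_integral_exp {Ω : Type*} [MeasurableSpace Ω] {ν : Measure Ω} [IsFiniteMeasure ν] {m n : ℕ}
    (E : Ω → ℝ) (α : Fin m → Ω → ℝ) (β : Fin n → Ω → ℝ)
    (K A B : ℝ)
    (hEm : AEStronglyMeasurable E ν) (hαm : ∀ k, AEStronglyMeasurable (α k) ν)
    (hβm : ∀ l, AEStronglyMeasurable (β l) ν)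
    (hE : ∀ᵐ f ∂ν, |E f| ≤ K) (hα : ∀ᵐ f ∂ν, ∀ k, |α k f| ≤ A)
    (hβ : ∀ᵐ f ∂ν, ∀ l, |β l f| ≤ B) :
    ∀ (L : List (Fin m)) (Q : Ω → ℝ) (c₀ : ℝ), AEStronglyMeasurable Q ν →
      (∀ᵐ f ∂ν, |Q f| ≤ c₀) →
    (L.foldl (fun G i => pdFst i G)
        (fun st => ∫ f, Q f * Real.exp (E f + (∑ k, st.1 k * α k f)
          + ∑ l, st.2 l * β l f) ∂ν))
      = fun st => ∫ f, (Q f * (L.map (fun i => α i f)).prod) *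
          Real.exp (E f + (∑ k, st.1 k * α k f) + ∑ l, st.2 l * β l f) ∂ν := by
  intro L
  induction L with
  | nil => intro Q c₀ hQm hQ; simp
  | cons i L ih =>
    intro Q c₀ hQm hQ
    rw [List.foldl_cons,
      pdFst_integral_exp E α β Q K A B c₀ hEm hαm hβm hQm hE hα hβ hQ i,
      ih (fun f => Q f * α i f) (c₀ * |A|) (hQm.mul (hαm i)) ?_]
    · funext st
      congr 1
      funext f
      rw [List.map_cons, List.prod_cons]
      ring
    · filter_upwards [hQ, hα] with f h1 h2
      rw [abs_mul]
      exact mul_le_mul h1 ((h2 i).trans (le_abs_self A)) (abs_nonneg _)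
        ((abs_nonneg _).trans h1)

lemma foldl_pdSnd_integral_exp {Ω : Type*} [MeasurableSpace Ω] {ν : Measure Ω} [IsFiniteMeasure ν] {m n : ℕ}
    (E : Ω → ℝ) (α : Fin m → Ω → ℝ) (β : Fin n → Ω → ℝ)
    (K A B : ℝ)
    (hEm : AEStronglyMeasurable E ν) (hαm : ∀ k, AEStronglyMeasurable (α k) ν)
    (hβm : ∀ l, AEStronglyMeasurable (β l) ν)
    (hE : ∀ᵐ f ∂ν, |E f| ≤ K) (hα : ∀ᵐ f ∂ν, ∀ k, |α k f| ≤ A)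
    (hβ : ∀ᵐ f ∂ν, ∀ l, |β l f| ≤ B) :
    ∀ (L : List (Fin n)) (Q : Ω → ℝ) (c₀ : ℝ), AEStronglyMeasurable Q ν →
      (∀ᵐ f ∂ν, |Q f| ≤ c₀) →
    (L.foldl (fun G j => pdSnd j G)
        (fun st => ∫ f, Q f * Real.exp (E f + (∑ k, st.1 k * α k f)
          + ∑ l, st.2 l * β l f) ∂ν))
      = fun st => ∫ f, (Q f * (L.map (fun j => β j f)).prod) *
          Real.exp (E f + (∑ k, st.1 k * α k f) + ∑ l, st.2 l * β l f) ∂ν := by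
  intro L
  induction L with
  | nil => intro Q c₀ hQm hQ; simp
  | cons j L ih =>
    intro Q c₀ hQm hQ
    rw [List.foldl_cons,
      pdSnd_integral_exp E α β Q K A B c₀ hEm hαm hβm hQm hE hα hβ hQ j,
      ih (fun f => Q f * β j f) (c₀ * |B|) (hQm.mul (hβm j)) ?_]
    · funext st
      congr 1
      funext f
      rw [List.map_cons, List.prod_cons]
      ring
    · filter_upwards [hQ, hβ] with f h1 h2
      rw [abs_mul]
      exact mul_le_mul h1 ((h2 j).trans (le_abs_self B)) (abs_nonneg _)
        ((abs_nonneg _).trans h1)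

lemma iterPD2_integral_exp {Ω : Type*} [MeasurableSpace Ω] {ν : Measure Ω} [IsFiniteMeasure ν]
    {m n : ℕ} (E : Ω → ℝ) (α : Fin m → Ω → ℝ) (β : Fin n → Ω → ℝ) (K A B : ℝ)
    (hEm : AEStronglyMeasurable E ν) (hαm : ∀ k, AEStronglyMeasurable (α k) ν)
    (hβm : ∀ l, AEStronglyMeasurable (β l) ν)
    (hE : ∀ᵐ f ∂ν, |E f| ≤ K) (hα : ∀ᵐ f ∂ν, ∀ k, |α k f| ≤ A)
    (hβ : ∀ᵐ f ∂ν, ∀ l, |β l f| ≤ B) :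
    iterPD2 (fun st : (Fin m → ℝ) × (Fin n → ℝ) =>
        ∫ f, Real.exp (E f + (∑ k, st.1 k * α k f) + ∑ l, st.2 l * β l f) ∂ν) (0, 0)
      = ∫ f, ((∏ k, α k f) * ∏ l, β l f) * Real.exp (E f) ∂ν := by
  rw [iterPD2]
  have h0 : (fun st : (Fin m → ℝ) × (Fin n → ℝ) =>
        ∫ f, Real.exp (E f + (∑ k, st.1 k * α k f) + ∑ l, st.2 l * β l f) ∂ν)
      = fun st => ∫ f, (fun _ : Ω => (1:ℝ)) f *
        Real.exp (E f + (∑ k, st.1 k * α k f) + ∑ l, st.2 l * β l f) ∂ν := by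
    funext st; congr 1; funext f; rw [one_mul]
  rw [h0, foldl_pdFst_integral_exp E α β K A B hEm hαm hβm hE hα hβ (List.finRange m)
    (fun _ => 1) 1 aestronglyMeasurable_const (Filter.Eventually.of_forall (by simp)),
    foldl_pdSnd_integral_exp E α β K A B hEm hαm hβm hE hα hβ (List.finRange n)
    (fun f => (1:ℝ) * ((List.finRange m).map (fun i => α i f)).prod) (1 * |A| ^ m)
    ((list_prod_aesm α hαm (List.finRange m)).const_mul 1) ?_]
  · show (∫ f, 1 * ((List.finRange m).map fun i => α i f).prod *
        ((List.finRange n).map fun j => β j f).prod *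
        Real.exp (E f + (∑ k, (0 : Fin m → ℝ) k * α k f)
          + ∑ l, (0 : Fin n → ℝ) l * β l f) ∂ν) = _
    congr 1
    funext f
    simp only [Pi.zero_apply, zero_mul, Finset.sum_const_zero, add_zero]
    rw [Fin.prod_univ_def, Fin.prod_univ_def]
    ring
  · filter_upwards [hα] with f h2
    rw [one_mul, one_mul]
    simpa using list_prod_abs_le (fun i => α i f) A h2 (List.finRange m)




lemma coef_identity (P e u v c d : ℝ) (i j : ℕ) :
    ((-1:ℝ)^(i+j) * c^i * d^j / ((Nat.factorial i : ℝ) * (Nat.factorial j : ℝ)))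
        * (P * (u^i * v^j * e))
      = (P * e) * (((-(c*u))^i / (Nat.factorial i : ℝ))
        * ((-(d*v))^j / (Nat.factorial j : ℝ))) := by
  have h1 : ((-(c*u)):ℝ)^i = (-1)^i * (c^i * u^i) := by
    rw [neg_eq_neg_one_mul, mul_pow, mul_pow]
  have h2 : ((-(d*v)):ℝ)^j = (-1)^j * (d^j * v^j) := by
    rw [neg_eq_neg_one_mul, mul_pow, mul_pow]
  rw [h1, h2, pow_add]
  ring

lemma integral_exp_series {Ω : Type*} [MeasurableSpace Ω] {ν : Measure Ω} [IsFiniteMeasure ν]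
    (E₀ U V P : Ω → ℝ) (c d K B₁ c₀ : ℝ)
    (hEm : AEStronglyMeasurable E₀ ν) (hUm : AEStronglyMeasurable U ν)
    (hVm : AEStronglyMeasurable V ν) (hPm : AEStronglyMeasurable P ν)
    (hK : 0 ≤ K) (hB : 0 ≤ B₁) (hc₀ : 0 ≤ c₀)
    (hE : ∀ᵐ f ∂ν, |E₀ f| ≤ K) (hU : ∀ᵐ f ∂ν, |U f| ≤ B₁)
    (hV : ∀ᵐ f ∂ν, |V f| ≤ B₁) (hP : ∀ᵐ f ∂ν, |P f| ≤ c₀) :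
    Summable (fun ij : ℕ × ℕ =>
      |(-1 : ℝ) ^ (ij.1 + ij.2) * c ^ ij.1 * d ^ ij.2 /
          ((Nat.factorial ij.1 : ℝ) * (Nat.factorial ij.2 : ℝ)) *
        ∫ f, P f * (U f ^ ij.1 * V f ^ ij.2 * Real.exp (E₀ f)) ∂ν|) ∧
    ∫ f, P f * Real.exp (E₀ f - c * U f - d * V f) ∂ν
      = ∑' ij : ℕ × ℕ, (-1 : ℝ) ^ (ij.1 + ij.2) * c ^ ij.1 * d ^ ij.2 /
          ((Nat.factorial ij.1 : ℝ) * (Nat.factorial ij.2 : ℝ)) *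
        ∫ f, P f * (U f ^ ij.1 * V f ^ ij.2 * Real.exp (E₀ f)) ∂ν := by
  set coef : ℕ × ℕ → ℝ := fun ij => (-1 : ℝ) ^ (ij.1 + ij.2) * c ^ ij.1 * d ^ ij.2 /
      ((Nat.factorial ij.1 : ℝ) * (Nat.factorial ij.2 : ℝ)) with hcoef
  have hcoefabs : ∀ ij : ℕ × ℕ, |coef ij| = |c| ^ ij.1 * |d| ^ ij.2 /
      ((Nat.factorial ij.1 : ℝ) * (Nat.factorial ij.2 : ℝ)) := by
    intro ij
    rw [hcoef]
    rw [abs_div, abs_mul, abs_mul, abs_pow, abs_pow, abs_pow, abs_neg, abs_one, one_pow,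
      one_mul, abs_mul, Nat.abs_cast, Nat.abs_cast]
  set g : ℕ × ℕ → Ω → ℝ := fun ij f =>
    coef ij * (P f * (U f ^ ij.1 * V f ^ ij.2 * Real.exp (E₀ f))) with hg
  have hgm : ∀ ij : ℕ × ℕ, AEStronglyMeasurable (g ij) ν := by
    intro ij
    exact (hPm.mul ((((continuous_pow ij.1).comp_aestronglyMeasurable hUm).mul
      ((continuous_pow ij.2).comp_aestronglyMeasurable hVm)).mul
      (Real.continuous_exp.comp_aestronglyMeasurable hEm))).const_mul _
  set Cb : ℕ × ℕ → ℝ := fun ij => (|c| * B₁) ^ ij.1 / (Nat.factorial ij.1 : ℝ) *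
      ((|d| * B₁) ^ ij.2 / (Nat.factorial ij.2 : ℝ)) * (c₀ * Real.exp K) with hCb
  have hCb0 : ∀ ij, 0 ≤ Cb ij := by
    intro ij
    have h1 : (0:ℝ) ≤ |c| * B₁ := mul_nonneg (abs_nonneg _) hB
    have h2 : (0:ℝ) ≤ |d| * B₁ := mul_nonneg (abs_nonneg _) hB
    have := Real.exp_pos K
    positivity
  have hCb_sum : Summable Cb :=
    (((Real.summable_pow_div_factorial (|c| * B₁)).mul_of_nonneg
      (Real.summable_pow_div_factorial (|d| * B₁))
      (fun i => by positivity) (fun j => by positivity)).mul_right _)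
  have hinner : ∀ᵐ f ∂ν, ∀ ij : ℕ × ℕ,
      |P f * (U f ^ ij.1 * V f ^ ij.2 * Real.exp (E₀ f))|
        ≤ c₀ * (B₁ ^ ij.1 * B₁ ^ ij.2 * Real.exp K) := by
    filter_upwards [hE, hU, hV, hP] with f h1 h2 h3 h4
    intro ij
    have hU' : |U f ^ ij.1| ≤ B₁ ^ ij.1 := by
      rw [abs_pow]; exact pow_le_pow_left₀ (abs_nonneg _) h2 _
    have hV' : |V f ^ ij.2| ≤ B₁ ^ ij.2 := by
      rw [abs_pow]; exact pow_le_pow_left₀ (abs_nonneg _) h3 _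
    have hE' : Real.exp (E₀ f) ≤ Real.exp K := Real.exp_le_exp.2 (abs_le.1 h1).2
    rw [abs_mul, abs_mul, abs_mul]
    refine mul_le_mul h4 ?_ (by positivity) hc₀
    rw [abs_of_pos (Real.exp_pos _)]
    refine mul_le_mul ?_ hE' (Real.exp_pos _).le (by positivity)
    exact mul_le_mul hU' hV' (abs_nonneg _) (by positivity)
  have hgb : ∀ᵐ f ∂ν, ∀ ij : ℕ × ℕ, ‖g ij f‖ ≤ Cb ij := by
    filter_upwards [hinner] with f h1
    intro ij
    simp only [hg]
    rw [Real.norm_eq_abs, abs_mul, hcoefabs]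
    calc |c| ^ ij.1 * |d| ^ ij.2 / ((Nat.factorial ij.1 : ℝ) * (Nat.factorial ij.2 : ℝ)) *
          |P f * (U f ^ ij.1 * V f ^ ij.2 * Real.exp (E₀ f))|
        ≤ |c| ^ ij.1 * |d| ^ ij.2 / ((Nat.factorial ij.1 : ℝ) * (Nat.factorial ij.2 : ℝ)) *
          (c₀ * (B₁ ^ ij.1 * B₁ ^ ij.2 * Real.exp K)) := by
          refine mul_le_mul_of_nonneg_left (h1 ij) ?_
          have hf1 : (0:ℝ) < (Nat.factorial ij.1 : ℝ) := by exact_mod_cast ij.1.factorial_pos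
          have hf2 : (0:ℝ) < (Nat.factorial ij.2 : ℝ) := by exact_mod_cast ij.2.factorial_pos
          positivity
      _ = Cb ij := by
          simp only [hCb]
          rw [mul_pow, mul_pow]
          ring
  have hterm : ∀ ij : ℕ × ℕ,
      |coef ij * ∫ f, P f * (U f ^ ij.1 * V f ^ ij.2 * Real.exp (E₀ f)) ∂ν|
        ≤ Cb ij * (ν Set.univ).toReal := by
    intro ij
    rw [abs_mul]
    have hi : |∫ f, P f * (U f ^ ij.1 * V f ^ ij.2 * Real.exp (E₀ f)) ∂ν|
        ≤ c₀ * (B₁ ^ ij.1 * B₁ ^ ij.2 * Real.exp K) * (ν Set.univ).toReal := by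
      rw [← Real.norm_eq_abs]
      exact norm_integral_le_of_norm_le_const (hinner.mono fun f hf => by
        rw [Real.norm_eq_abs]; exact hf ij)
    calc |coef ij| * |∫ f, P f * (U f ^ ij.1 * V f ^ ij.2 * Real.exp (E₀ f)) ∂ν|
        ≤ |coef ij| * (c₀ * (B₁ ^ ij.1 * B₁ ^ ij.2 * Real.exp K) * (ν Set.univ).toReal) :=
          mul_le_mul_of_nonneg_left hi (abs_nonneg _)
      _ = Cb ij * (ν Set.univ).toReal := by
          simp only [hCb]
          rw [hcoefabs, mul_pow, mul_pow]
          ring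
  constructor
  · exact Summable.of_nonneg_of_le (fun ij => abs_nonneg _) hterm (hCb_sum.mul_right _)
  · have hexp : ∀ x : ℝ, Real.exp x = ∑' i : ℕ, x ^ i / (Nat.factorial i : ℝ) := by
      intro x
      rw [Real.exp_eq_exp_ℝ]
      exact congrFun (NormedSpace.exp_eq_tsum_div (𝔸 := ℝ)) x
    have hsumnorm : ∀ x : ℝ, Summable fun i : ℕ => ‖x ^ i / (Nat.factorial i : ℝ)‖ := by
      intro x
      refine (Real.summable_pow_div_factorial |x|).congr fun i => ?_
      rw [Real.norm_eq_abs, abs_div, abs_pow, Nat.abs_cast]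
    have hpt : ∀ f : Ω, P f * Real.exp (E₀ f - c * U f - d * V f) = ∑' ij : ℕ × ℕ, g ij f := by
      intro f
      have h1 : E₀ f - c * U f - d * V f = E₀ f + -(c * U f) + -(d * V f) := by ring
      rw [h1, Real.exp_add, Real.exp_add]
      have h2 : Real.exp (-(c * U f)) * Real.exp (-(d * V f))
          = ∑' ij : ℕ × ℕ, ((-(c * U f)) ^ ij.1 / (Nat.factorial ij.1 : ℝ))
            * ((-(d * V f)) ^ ij.2 / (Nat.factorial ij.2 : ℝ)) := by
        rw [hexp (-(c * U f)), hexp (-(d * V f))]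
        exact tsum_mul_tsum_of_summable_norm (hsumnorm _) (hsumnorm _)
      calc P f * (Real.exp (E₀ f) * Real.exp (-(c * U f)) * Real.exp (-(d * V f)))
          = (P f * Real.exp (E₀ f)) * (Real.exp (-(c * U f)) * Real.exp (-(d * V f))) := by
            ring
        _ = ∑' ij : ℕ × ℕ, (P f * Real.exp (E₀ f)) *
            (((-(c * U f)) ^ ij.1 / (Nat.factorial ij.1 : ℝ))
              * ((-(d * V f)) ^ ij.2 / (Nat.factorial ij.2 : ℝ))) := by
            rw [h2, tsum_mul_left]
        _ = ∑' ij : ℕ × ℕ, g ij f := by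
            refine tsum_congr fun ij => ?_
            simp only [hg, hcoef]
            exact (coef_identity (P f) (Real.exp (E₀ f)) (U f) (V f) c d ij.1 ij.2).symm
    have hlint : ∀ ij : ℕ × ℕ, ∫⁻ f, ‖g ij f‖₊ ∂ν ≤ ENNReal.ofReal (Cb ij) * ν Set.univ := by
      intro ij
      calc ∫⁻ f, (‖g ij f‖₊ : ℝ≥0∞) ∂ν ≤ ∫⁻ _, ENNReal.ofReal (Cb ij) ∂ν := by
            refine lintegral_mono_ae (hgb.mono fun f hf => ?_)
            rw [← enorm_eq_nnnorm, ← ofReal_norm]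
            exact ENNReal.ofReal_le_ofReal (hf ij)
        _ = ENNReal.ofReal (Cb ij) * ν Set.univ := lintegral_const _
    have hne : (∑' ij : ℕ × ℕ, ∫⁻ f, ‖g ij f‖₊ ∂ν) ≠ ⊤ := by
      refine ne_top_of_le_ne_top ?_ (ENNReal.tsum_le_tsum hlint)
      rw [ENNReal.tsum_mul_right, ← ENNReal.ofReal_tsum_of_nonneg hCb0 hCb_sum]
      exact (ENNReal.mul_lt_top ENNReal.ofReal_lt_top (measure_lt_top ν _)).ne
    calc ∫ f, P f * Real.exp (E₀ f - c * U f - d * V f) ∂ν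
        = ∫ f, ∑' ij : ℕ × ℕ, g ij f ∂ν :=
          integral_congr_ae (Filter.Eventually.of_forall hpt)
      _ = ∑' ij : ℕ × ℕ, ∫ f, g ij f ∂ν := integral_tsum hgm hne
      _ = _ := by
          refine tsum_congr fun ij => ?_
          simp only [hg]
          exact integral_const_mul _ _


section Helpers
set_option linter.unusedSectionVars false
variable {X : Type*} [MeasurableSpace X] {μ : Measure X}

lemma linfty_ae_bound (u : Lp ℝ ⊤ μ) : ∀ᵐ x ∂μ, ‖u x‖ ≤ ‖u‖ := by
  filter_upwards [MeasureTheory.ae_le_eLpNormEssSup (f := ⇑u) (μ := μ)] with x hx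
  have hne : eLpNormEssSup (⇑u) μ ≠ ⊤ := by
    have := Lp.eLpNorm_ne_top u
    rwa [eLpNorm_exponent_top] at this
  have h2 := ENNReal.toReal_mono hne hx
  rw [Lp.norm_def, eLpNorm_exponent_top]
  simpa using h2

variable [IsProbabilityMeasure μ]

lemma ae_abs_le_of_eLpNorm_top_le {M : ℝ} (hM0 : 0 ≤ M) {v : X → ℝ}
    (h : eLpNorm v ⊤ μ ≤ ENNReal.ofReal M) : ∀ᵐ x ∂μ, |v x| ≤ M := by
  rw [eLpNorm_exponent_top] at h
  filter_upwards [MeasureTheory.ae_le_eLpNormEssSup (f := v) (μ := μ)] with x hx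
  have h2 := ENNReal.toReal_mono ENNReal.ofReal_ne_top (hx.trans h)
  rw [ENNReal.toReal_ofReal hM0] at h2
  simpa using h2

lemma l2_integrable (u : Lp ℝ 2 μ) : Integrable (⇑u) μ :=
  (Lp.memLp u).integrable one_le_two

lemma l2_int_abs_le (u : Lp ℝ 2 μ) : ∫ x, |u x| ∂μ ≤ ‖u‖ := by
  have hm := Lp.aestronglyMeasurable u
  have h1 : ∫ x, |u x| ∂μ = (∫⁻ x, ‖u x‖ₑ ∂μ).toReal := by
    simpa [Real.norm_eq_abs] using integral_norm_eq_lintegral_enorm hm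
  rw [h1, Lp.norm_def]
  refine ENNReal.toReal_mono (Lp.eLpNorm_ne_top u) ?_
  rw [← eLpNorm_one_eq_lintegral_enorm]
  exact eLpNorm_le_eLpNorm_of_exponent_le one_le_two hm

lemma l2_int_abs_sub_le (u v : Lp ℝ 2 μ) : ∫ x, |u x - v x| ∂μ ≤ ‖u - v‖ := by
  refine le_trans (le_of_eq (integral_congr_ae ?_)) (l2_int_abs_le (u - v))
  filter_upwards [Lp.coeFn_sub u v] with x hx
  rw [hx, Pi.sub_apply]

lemma int_abs_le_of_ae_bound {M : ℝ} {v : X → ℝ} (hv : ∀ᵐ x ∂μ, |v x| ≤ M) :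
    ∫ x, |v x| ∂μ ≤ M := by
  have h := norm_integral_le_of_norm_le_const (μ := μ) (f := fun x => |v x|) (C := M)
    (by filter_upwards [hv] with x hx; rwa [Real.norm_eq_abs, abs_abs])
  rw [probReal_univ, mul_one] at h
  exact (le_abs_self _).trans ((Real.norm_eq_abs _ ▸ h))

/-- the clamp function -/
def clampFun (M : ℝ) : ℝ → ℝ := fun t => max (-M) (min M t)

lemma clampFun_lip (M : ℝ) : LipschitzWith 1 (clampFun M) :=
  (LipschitzWith.id.const_min M).const_max (-M)

lemma clampFun_zero {M : ℝ} (hM : 0 ≤ M) : clampFun M 0 = 0 := by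
  rw [clampFun, min_eq_right hM, max_eq_right (neg_nonpos.2 hM)]

lemma clampFun_abs_le {M : ℝ} (hM : 0 ≤ M) (t : ℝ) : |clampFun M t| ≤ M := by
  rw [clampFun, abs_le]
  constructor
  · exact le_max_left _ _
  · exact max_le (by linarith) (min_le_left _ _)

lemma clampFun_eq_self {M t : ℝ} (h : |t| ≤ M) : clampFun M t = t := by
  rw [clampFun, min_eq_right (abs_le.1 h).2, max_eq_right (abs_le.1 h).1]

/-- clamping as a map on `L²`. -/
noncomputable def Tcl {M : ℝ} (hM : 0 ≤ M) (u : Lp ℝ 2 μ) : Lp ℝ 2 μ :=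
  (clampFun_lip M).compLp (clampFun_zero hM) u

lemma Tcl_coe {M : ℝ} (hM : 0 ≤ M) (u : Lp ℝ 2 μ) :
    ⇑(Tcl hM u) =ᵐ[μ] fun x => clampFun M (u x) :=
  LipschitzWith.coeFn_compLp _ _ _

lemma Tcl_bound {M : ℝ} (hM : 0 ≤ M) (u : Lp ℝ 2 μ) :
    ∀ᵐ x ∂μ, |(Tcl hM u) x| ≤ M := by
  filter_upwards [Tcl_coe hM u] with x hx
  rw [hx]
  exact clampFun_abs_le hM _

lemma Tcl_eq {M : ℝ} (hM : 0 ≤ M) (u : Lp ℝ 2 μ) (hu : ∀ᵐ x ∂μ, |u x| ≤ M) :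
    ⇑(Tcl hM u) =ᵐ[μ] ⇑u := by
  filter_upwards [Tcl_coe hM u, hu] with x hx h2
  rw [hx, clampFun_eq_self h2]

lemma Tcl_dist_le {M : ℝ} (hM : 0 ≤ M) (u v : Lp ℝ 2 μ) :
    dist (Tcl hM u) (Tcl hM v) ≤ dist u v := by
  have := (LipschitzWith.lipschitzWith_compLp (clampFun_lip M) (clampFun_zero hM)
    (μ := μ) (E := ℝ) (p := 2)).dist_le_mul u v
  simpa [Tcl] using this

lemma quart_pow_aesm (u : Lp ℝ 2 μ) :
    AEStronglyMeasurable (fun x => (u x) ^ 4) μ :=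
  (continuous_pow 4).comp_aestronglyMeasurable (Lp.aestronglyMeasurable u)

lemma quart_intble {M : ℝ} (u : Lp ℝ 2 μ) (hu : ∀ᵐ x ∂μ, |u x| ≤ M) :
    Integrable (fun x => (u x) ^ 4) μ := by
  refine Integrable.mono' (integrable_const (M ^ 4)) (quart_pow_aesm u) ?_
  filter_upwards [hu] with x hx
  rw [Real.norm_eq_abs, abs_pow]
  exact pow_le_pow_left₀ (abs_nonneg _) hx 4

lemma quart_bound {M : ℝ} (u : Lp ℝ 2 μ) (hu : ∀ᵐ x ∂μ, |u x| ≤ M) :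
    |∫ x, (u x) ^ 4 ∂μ| ≤ M ^ 4 := by
  rw [← Real.norm_eq_abs]
  have h := norm_integral_le_of_norm_le_const (μ := μ) (C := M ^ 4)
    (f := fun x => (u x) ^ 4) ?_
  · rwa [probReal_univ, mul_one] at h
  · filter_upwards [hu] with x hx
    rw [Real.norm_eq_abs, abs_pow]
    exact pow_le_pow_left₀ (abs_nonneg _) hx 4

lemma quart_lip {M : ℝ} (hM0 : 0 ≤ M) (u v : Lp ℝ 2 μ)
    (hu : ∀ᵐ x ∂μ, |u x| ≤ M) (hv : ∀ᵐ x ∂μ, |v x| ≤ M) :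
    |(∫ x, (u x) ^ 4 ∂μ) - ∫ x, (v x) ^ 4 ∂μ| ≤ 4 * M ^ 3 * ‖u - v‖ := by
  rw [← integral_sub (quart_intble u hu) (quart_intble v hv)]
  have step1 : |∫ x, ((u x) ^ 4 - (v x) ^ 4) ∂μ| ≤ ∫ x, 4 * M ^ 3 * |u x - v x| ∂μ := by
    rw [← Real.norm_eq_abs]
    refine norm_integral_le_of_norm_le (((l2_integrable u).sub (l2_integrable v)).abs.const_mul _) ?_
    filter_upwards [hu, hv] with x h1 h2
    rw [Real.norm_eq_abs]
    have hfac : (u x) ^ 4 - (v x) ^ 4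
        = (u x - v x) * ((u x) ^ 3 + (u x) ^ 2 * v x + u x * (v x) ^ 2 + (v x) ^ 3) := by ring
    rw [hfac, abs_mul]
    have hM3 : |(u x) ^ 3 + (u x) ^ 2 * v x + u x * (v x) ^ 2 + (v x) ^ 3| ≤ 4 * M ^ 3 := by
      have b1 : |(u x) ^ 3| ≤ M ^ 3 := by
        rw [abs_pow]; exact pow_le_pow_left₀ (abs_nonneg _) h1 3
      have b4 : |(v x) ^ 3| ≤ M ^ 3 := by
        rw [abs_pow]; exact pow_le_pow_left₀ (abs_nonneg _) h2 3
      have b2 : |(u x) ^ 2 * v x| ≤ M ^ 3 := by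
        rw [abs_mul, abs_pow]
        calc |u x| ^ 2 * |v x| ≤ M ^ 2 * M :=
              mul_le_mul (pow_le_pow_left₀ (abs_nonneg _) h1 2) h2 (abs_nonneg _)
                (by positivity)
          _ = M ^ 3 := by ring
      have b3 : |u x * (v x) ^ 2| ≤ M ^ 3 := by
        rw [abs_mul, abs_pow]
        calc |u x| * |v x| ^ 2 ≤ M * M ^ 2 :=
              mul_le_mul h1 (pow_le_pow_left₀ (abs_nonneg _) h2 2) (by positivity) hM0
          _ = M ^ 3 := by ring
      calc |(u x) ^ 3 + (u x) ^ 2 * v x + u x * (v x) ^ 2 + (v x) ^ 3|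
          ≤ |(u x) ^ 3 + (u x) ^ 2 * v x + u x * (v x) ^ 2| + |(v x) ^ 3| := abs_add_le _ _
        _ ≤ |(u x) ^ 3 + (u x) ^ 2 * v x| + |u x * (v x) ^ 2| + |(v x) ^ 3| := by
            linarith [abs_add_le ((u x) ^ 3 + (u x) ^ 2 * v x) (u x * (v x) ^ 2)]
        _ ≤ |(u x) ^ 3| + |(u x) ^ 2 * v x| + |u x * (v x) ^ 2| + |(v x) ^ 3| := by
            linarith [abs_add_le ((u x) ^ 3) ((u x) ^ 2 * v x)]
        _ ≤ 4 * M ^ 3 := by linarith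
    calc |u x - v x| * |(u x) ^ 3 + (u x) ^ 2 * v x + u x * (v x) ^ 2 + (v x) ^ 3|
        ≤ |u x - v x| * (4 * M ^ 3) := mul_le_mul_of_nonneg_left hM3 (abs_nonneg _)
      _ = 4 * M ^ 3 * |u x - v x| := by ring
  calc |∫ x, ((u x) ^ 4 - (v x) ^ 4) ∂μ| ≤ ∫ x, 4 * M ^ 3 * |u x - v x| ∂μ := step1
    _ = 4 * M ^ 3 * ∫ x, |u x - v x| ∂μ := integral_const_mul _ _
    _ ≤ 4 * M ^ 3 * ‖u - v‖ :=
        mul_le_mul_of_nonneg_left (l2_int_abs_sub_le u v) (by positivity)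

section Wterm
variable (w : Lp ℝ ⊤ (μ.prod μ))

lemma wmul_aesm (v : Lp ℝ 2 μ) :
    AEStronglyMeasurable (fun z : X × X => (w : X × X → ℝ) z * v z.2) (μ.prod μ) :=
  (Lp.aestronglyMeasurable w).mul
    ((Lp.aestronglyMeasurable v).comp_quasiMeasurePreserving
      Measure.quasiMeasurePreserving_snd)

lemma Wfun_aesm (v : Lp ℝ 2 μ) :
    AEStronglyMeasurable (fun x => ∫ y, (w : X × X → ℝ) (x, y) * v y ∂μ) μ :=
  (wmul_aesm w v).integral_prod_right'

lemma Wfun_slice_intble (v : Lp ℝ 2 μ) :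
    ∀ᵐ x ∂μ, Integrable (fun y => (w : X × X → ℝ) (x, y) * v y) μ := by
  filter_upwards [(wmul_aesm w v).prodMk_left,
    Measure.ae_ae_of_ae_prod (linfty_ae_bound w)] with x hm hb
  refine Integrable.mono' ((l2_integrable v).abs.const_mul ‖w‖) hm ?_
  filter_upwards [hb] with y hy
  rw [norm_mul, Real.norm_eq_abs (v y)]
  exact mul_le_mul_of_nonneg_right hy (abs_nonneg _)

lemma Wfun_bound (v : Lp ℝ 2 μ) :
    ∀ᵐ x ∂μ, |∫ y, (w : X × X → ℝ) (x, y) * v y ∂μ| ≤ ‖w‖ * ∫ y, |v y| ∂μ := by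
  filter_upwards [Measure.ae_ae_of_ae_prod (linfty_ae_bound w)] with x hx
  rw [← Real.norm_eq_abs]
  calc ‖∫ y, (w : X × X → ℝ) (x, y) * v y ∂μ‖ ≤ ∫ y, ‖w‖ * |v y| ∂μ := by
        refine norm_integral_le_of_norm_le ((l2_integrable v).abs.const_mul ‖w‖) ?_
        filter_upwards [hx] with y hy
        rw [norm_mul, Real.norm_eq_abs (v y)]
        exact mul_le_mul_of_nonneg_right hy (abs_nonneg _)
    _ = ‖w‖ * ∫ y, |v y| ∂μ := integral_const_mul _ _

lemma Wfun_sub (u v : Lp ℝ 2 μ) :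
    ∀ᵐ x ∂μ, (∫ y, (w : X × X → ℝ) (x, y) * u y ∂μ) - (∫ y, (w : X × X → ℝ) (x, y) * v y ∂μ)
      = ∫ y, (w : X × X → ℝ) (x, y) * ((u - v : Lp ℝ 2 μ) y) ∂μ := by
  filter_upwards [Wfun_slice_intble w u, Wfun_slice_intble w v] with x h1 h2
  rw [← integral_sub h1 h2]
  refine integral_congr_ae ?_
  filter_upwards [Lp.coeFn_sub u v] with y hy
  rw [hy, Pi.sub_apply, mul_sub]

/-- The interaction functional `e1 v h = ∫ h(x) (Wv)(x) dx`. -/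
noncomputable def e1f (v h : Lp ℝ 2 μ) : ℝ :=
  ∫ x, h x * (∫ y, (w : X × X → ℝ) (x, y) * v y ∂μ) ∂μ

lemma e1_intble {M : ℝ} (v h : Lp ℝ 2 μ) (hv : ∀ᵐ x ∂μ, |v x| ≤ M) :
    Integrable (fun x => h x * ∫ y, (w : X × X → ℝ) (x, y) * v y ∂μ) μ := by
  refine Integrable.mono' ((l2_integrable h).abs.const_mul (‖w‖ * M))
    ((Lp.aestronglyMeasurable h).mul (Wfun_aesm w v)) ?_
  filter_upwards [Wfun_bound w v] with x hx
  rw [norm_mul, Real.norm_eq_abs (h x), Real.norm_eq_abs]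
  have hW : |∫ y, (w : X × X → ℝ) (x, y) * v y ∂μ| ≤ ‖w‖ * M :=
    hx.trans (mul_le_mul_of_nonneg_left (int_abs_le_of_ae_bound hv) (norm_nonneg w))
  calc |h x| * |∫ y, (w : X × X → ℝ) (x, y) * v y ∂μ| ≤ |h x| * (‖w‖ * M) :=
        mul_le_mul_of_nonneg_left hW (abs_nonneg _)
    _ = ‖w‖ * M * |h x| := by ring

lemma e1_bound {M : ℝ} (v h : Lp ℝ 2 μ) (hv : ∀ᵐ x ∂μ, |v x| ≤ M)
    (hh : ∀ᵐ x ∂μ, |h x| ≤ M) : |e1f w v h| ≤ M * (‖w‖ * M) := by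
  rw [e1f, ← Real.norm_eq_abs]
  have key := norm_integral_le_of_norm_le_const (μ := μ) (C := M * (‖w‖ * M))
    (f := fun x => h x * ∫ y, (w : X × X → ℝ) (x, y) * v y ∂μ) ?_
  · rwa [probReal_univ, mul_one] at key
  · filter_upwards [Wfun_bound w v, hh] with x h1 h2
    rw [norm_mul, Real.norm_eq_abs (h x), Real.norm_eq_abs]
    refine mul_le_mul h2 (h1.trans ?_) (abs_nonneg _) ((abs_nonneg _).trans h2)
    exact mul_le_mul_of_nonneg_left (int_abs_le_of_ae_bound hv) (norm_nonneg w)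

lemma e1_diff {M : ℝ} (hM0 : 0 ≤ M) (u v g h : Lp ℝ 2 μ)
    (hu : ∀ᵐ x ∂μ, |u x| ≤ M) (hv : ∀ᵐ x ∂μ, |v x| ≤ M)
    (hg : ∀ᵐ x ∂μ, |g x| ≤ M) (hh : ∀ᵐ x ∂μ, |h x| ≤ M) :
    |e1f w u g - e1f w v h| ≤ ‖w‖ * M * ‖u - v‖ + ‖w‖ * M * ‖g - h‖ := by
  have d1 : |e1f w u g - e1f w v g| ≤ ‖w‖ * M * ‖u - v‖ := by
    have hsub : e1f w u g - e1f w v g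
        = ∫ x, g x * (∫ y, (w : X × X → ℝ) (x, y) * ((u - v : Lp ℝ 2 μ) y) ∂μ) ∂μ := by
      rw [e1f, e1f, ← integral_sub (e1_intble w u g hu) (e1_intble w v g hv)]
      refine integral_congr_ae ?_
      filter_upwards [Wfun_sub w u v] with x hx
      rw [← mul_sub, hx]
    rw [hsub, ← Real.norm_eq_abs]
    have key := norm_integral_le_of_norm_le_const (μ := μ) (C := M * (‖w‖ * ‖u - v‖))
      (f := fun x => g x * ∫ y, (w : X × X → ℝ) (x, y) * ((u - v : Lp ℝ 2 μ) y) ∂μ) ?_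
    · rw [probReal_univ, mul_one] at key
      refine key.trans (le_of_eq (by ring))
    · filter_upwards [Wfun_bound w (u - v), hg] with x h1 h2
      rw [norm_mul, Real.norm_eq_abs (g x), Real.norm_eq_abs]
      refine mul_le_mul h2 (h1.trans (mul_le_mul_of_nonneg_left ?_ (norm_nonneg w)))
        (abs_nonneg _) hM0
      exact le_trans (le_of_eq (integral_congr_ae (Filter.Eventually.of_forall fun y => rfl)))
        (l2_int_abs_le (u - v))
  have d2 : |e1f w v g - e1f w v h| ≤ ‖w‖ * M * ‖g - h‖ := by
    have hsub : e1f w v g - e1f w v h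
        = ∫ x, (g x - h x) * (∫ y, (w : X × X → ℝ) (x, y) * v y ∂μ) ∂μ := by
      rw [e1f, e1f, ← integral_sub (e1_intble w v g hv) (e1_intble w v h hv)]
      refine integral_congr_ae (Filter.Eventually.of_forall fun x => ?_)
      ring
    rw [hsub, ← Real.norm_eq_abs]
    have key := norm_integral_le_of_norm_le
      (f := fun x => ((g : X → ℝ) x - h x) * ∫ y, (w : X × X → ℝ) (x, y) * v y ∂μ)
      (g := fun x => (‖w‖ * M) * |g x - h x|)
      ((((l2_integrable g).sub (l2_integrable h)).abs.const_mul (‖w‖ * M))) ?_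
    · refine key.trans ?_
      rw [integral_const_mul]
      refine mul_le_mul_of_nonneg_left (l2_int_abs_sub_le g h) ?_
      positivity
    · filter_upwards [Wfun_bound w v] with x hx
      rw [norm_mul, Real.norm_eq_abs, Real.norm_eq_abs, mul_comm (‖w‖ * M)]
      refine mul_le_mul_of_nonneg_left ?_ (abs_nonneg _)
      exact hx.trans (mul_le_mul_of_nonneg_left (int_abs_le_of_ae_bound hv) (norm_nonneg w))
  calc |e1f w u g - e1f w v h|
      = |(e1f w u g - e1f w v g) + (e1f w v g - e1f w v h)| := by ring_nf
    _ ≤ |e1f w u g - e1f w v g| + |e1f w v g - e1f w v h| := abs_add_le _ _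
    _ ≤ ‖w‖ * M * ‖u - v‖ + ‖w‖ * M * ‖g - h‖ := add_le_add d1 d2

end Wterm

section Espin
variable (a : Lp ℝ ⊤ μ)

lemma lint_intble (v : Lp ℝ 2 μ) : Integrable (fun x => a x * v x) μ :=
  Integrable.bdd_mul (l2_integrable v) (Lp.aestronglyMeasurable a) (linfty_ae_bound a)

lemma lint_bound {M : ℝ} (v : Lp ℝ 2 μ) (hv : ∀ᵐ x ∂μ, |v x| ≤ M) :
    |∫ x, a x * v x ∂μ| ≤ ‖a‖ * M := by
  rw [← Real.norm_eq_abs]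
  have key := norm_integral_le_of_norm_le_const (μ := μ) (C := ‖a‖ * M)
    (f := fun x => (a : X → ℝ) x * v x) ?_
  · rwa [probReal_univ, mul_one] at key
  · filter_upwards [linfty_ae_bound a, hv] with x h1 h2
    rw [norm_mul, Real.norm_eq_abs (v x)]
    exact mul_le_mul h1 h2 (abs_nonneg _) (norm_nonneg a)

lemma lint_diff (v v' : Lp ℝ 2 μ) :
    |(∫ x, a x * v x ∂μ) - ∫ x, a x * v' x ∂μ| ≤ ‖a‖ * ‖v - v'‖ := by
  rw [← integral_sub (lint_intble a v) (lint_intble a v')]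
  have h1 : (∫ x, ((a : X → ℝ) x * v x - a x * v' x) ∂μ)
      = ∫ x, a x * (v x - v' x) ∂μ := by
    refine integral_congr_ae (Filter.Eventually.of_forall fun x => ?_)
    ring
  rw [h1, ← Real.norm_eq_abs]
  have key := norm_integral_le_of_norm_le
    (f := fun x => (a : X → ℝ) x * (v x - v' x))
    (g := fun x => ‖a‖ * |v x - v' x|)
    (((l2_integrable v).sub (l2_integrable v')).abs.const_mul ‖a‖) ?_
  · refine key.trans ?_
    rw [integral_const_mul]
    exact mul_le_mul_of_nonneg_left (l2_int_abs_sub_le v v') (norm_nonneg a)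
  · filter_upwards [linfty_ae_bound a] with x h1
    rw [norm_mul, Real.norm_eq_abs (v x - v' x)]
    exact mul_le_mul_of_nonneg_right h1 (abs_nonneg _)

lemma espin_congr (aa bb : X → ℝ) (ww : X × X → ℝ) {v v' h h' : X → ℝ}
    (hv : v =ᵐ[μ] v') (hh : h =ᵐ[μ] h') :
    -(∫ x, h x * (∫ y, ww (x, y) * v y ∂μ) ∂μ) - (∫ x, aa x * v x ∂μ)
        - ∫ x, bb x * h x ∂μ
      = -(∫ x, h' x * (∫ y, ww (x, y) * v' y ∂μ) ∂μ) - (∫ x, aa x * v' x ∂μ)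
        - ∫ x, bb x * h' x ∂μ := by
  have e1 : (∫ x, h x * (∫ y, ww (x, y) * v y ∂μ) ∂μ)
      = ∫ x, h' x * (∫ y, ww (x, y) * v' y ∂μ) ∂μ := by
    refine integral_congr_ae ?_
    filter_upwards [hh] with x hx
    rw [hx]
    congr 1
    refine integral_congr_ae ?_
    filter_upwards [hv] with y hy
    rw [hy]
  have e2 : (∫ x, aa x * v x ∂μ) = ∫ x, aa x * v' x ∂μ := by
    refine integral_congr_ae ?_
    filter_upwards [hv] with x hx
    rw [hx]
  have e3 : (∫ x, bb x * h x ∂μ) = ∫ x, bb x * h' x ∂μ := by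
    refine integral_congr_ae ?_
    filter_upwards [hh] with x hx
    rw [hx]
  rw [e1, e2, e3]

lemma espin_abs_bound {M : ℝ} (b : Lp ℝ ⊤ μ) (w : Lp ℝ ⊤ (μ.prod μ))
    (v h : Lp ℝ 2 μ) (hv : ∀ᵐ x ∂μ, |v x| ≤ M) (hh : ∀ᵐ x ∂μ, |h x| ≤ M) :
    |(-(e1f w v h) - (∫ x, a x * v x ∂μ)) - ∫ x, b x * h x ∂μ|
      ≤ M * (‖w‖ * M) + ‖a‖ * M + ‖b‖ * M := by
  have h1 := e1_bound w v h hv hh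
  have h2 := lint_bound a v hv
  have h3 := lint_bound b h hh
  calc |(-(e1f w v h) - (∫ x, a x * v x ∂μ)) - ∫ x, b x * h x ∂μ|
      ≤ |(-(e1f w v h) - (∫ x, a x * v x ∂μ))| + |∫ x, b x * h x ∂μ| := abs_sub _ _
    _ ≤ |e1f w v h| + |∫ x, a x * v x ∂μ| + |∫ x, b x * h x ∂μ| := by
        have := abs_sub (-(e1f w v h)) (∫ x, (a : X → ℝ) x * v x ∂μ)
        rw [abs_neg] at this
        linarith
    _ ≤ M * (‖w‖ * M) + ‖a‖ * M + ‖b‖ * M := by linarith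

lemma espin_diff {M : ℝ} (hM0 : 0 ≤ M) (b : Lp ℝ ⊤ μ) (w : Lp ℝ ⊤ (μ.prod μ))
    (u v g h : Lp ℝ 2 μ)
    (hu : ∀ᵐ x ∂μ, |u x| ≤ M) (hv : ∀ᵐ x ∂μ, |v x| ≤ M)
    (hg : ∀ᵐ x ∂μ, |g x| ≤ M) (hh : ∀ᵐ x ∂μ, |h x| ≤ M) :
    |((-(e1f w u g) - (∫ x, a x * u x ∂μ)) - ∫ x, b x * g x ∂μ)
        - ((-(e1f w v h) - (∫ x, a x * v x ∂μ)) - ∫ x, b x * h x ∂μ)|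
      ≤ (‖w‖ * M + ‖a‖) * ‖u - v‖ + (‖w‖ * M + ‖b‖) * ‖g - h‖ := by
  have d1 := e1_diff w hM0 u v g h hu hv hg hh
  have d2 := lint_diff a u v
  have d3 := lint_diff b g h
  have hre : ((-(e1f w u g) - (∫ x, (a : X → ℝ) x * u x ∂μ)) - ∫ x, (b : X → ℝ) x * g x ∂μ)
        - ((-(e1f w v h) - (∫ x, (a : X → ℝ) x * v x ∂μ)) - ∫ x, (b : X → ℝ) x * h x ∂μ)
      = (-(e1f w u g - e1f w v h) + -((∫ x, (a : X → ℝ) x * u x ∂μ)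
          - ∫ x, (a : X → ℝ) x * v x ∂μ))
        + -((∫ x, (b : X → ℝ) x * g x ∂μ) - ∫ x, (b : X → ℝ) x * h x ∂μ) := by ring
  rw [hre]
  calc |_ + _| ≤ |(-(e1f w u g - e1f w v h) + -((∫ x, (a : X → ℝ) x * u x ∂μ)
          - ∫ x, (a : X → ℝ) x * v x ∂μ))|
        + |(-((∫ x, (b : X → ℝ) x * g x ∂μ) - ∫ x, (b : X → ℝ) x * h x ∂μ))| := abs_add_le _ _
    _ ≤ |e1f w u g - e1f w v h| + |(∫ x, (a : X → ℝ) x * u x ∂μ)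
          - ∫ x, (a : X → ℝ) x * v x ∂μ|
        + |(∫ x, (b : X → ℝ) x * g x ∂μ) - ∫ x, (b : X → ℝ) x * h x ∂μ| := by
        rw [abs_neg]
        have := abs_add_le (-(e1f w u g - e1f w v h))
          (-((∫ x, (a : X → ℝ) x * u x ∂μ) - ∫ x, (a : X → ℝ) x * v x ∂μ))
        rw [abs_neg, abs_neg] at this
        linarith
    _ ≤ (‖w‖ * M + ‖a‖) * ‖u - v‖ + (‖w‖ * M + ‖b‖) * ‖g - h‖ := by
        have := d1
        nlinarith [norm_nonneg (u - v), norm_nonneg (g - h)]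

end Espin

lemma l2_inner_eq (ψ v : Lp ℝ 2 μ) : (inner ℝ ψ v : ℝ) = ∫ x, ψ x * v x ∂μ := by
  rw [MeasureTheory.L2.inner_def]
  refine integral_congr_ae (Filter.Eventually.of_forall fun x => ?_)
  simp [RCLike.inner_apply, starRingEnd_apply, mul_comm]

lemma phi_bound {M : ℝ} (ψ : Lp ℝ 2 μ) {v : X → ℝ} (hv : ∀ᵐ x ∂μ, |v x| ≤ M) :
    |∫ x, ψ x * v x ∂μ| ≤ (∫ x, |ψ x| ∂μ) * M := by
  rw [← Real.norm_eq_abs]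
  refine (norm_integral_le_of_norm_le ((l2_integrable ψ).abs.mul_const M) ?_).trans ?_
  · filter_upwards [hv] with x hx
    rw [norm_mul, Real.norm_eq_abs, Real.norm_eq_abs]
    exact mul_le_mul_of_nonneg_left hx (abs_nonneg _)
  · exact le_of_eq (integral_mul_const _ _)

end Helpers

/-- perturbative expansion of the correlation functions in the coupling
parameters `c`, `d`: the iterated derivative at `(s,t) = (0,0)` of
`(s,t) ↦ ∫ exp(−E^spin − cU − dV + Σ s_i ⟨φ_i,v⟩ + Σ t_j ⟨θ_j,h⟩) dν` equals
`Σ_{i,j} ((−1)^{i+j} c^i d^j/(i!j!)) ∫ ∏⟨φ_k,v⟩ ∏⟨θ_l,h⟩ U^i V^j e^{−E^spin} dν`,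
the double series converging absolutely. -/
theorem stmt14 {p : ℕ} [Fact p.Prime] {N : ℕ} (hN : 1 ≤ N)
    [MeasurableSpace (PSpace p N)] [BorelSpace (PSpace p N)]
    (μ : Measure (PSpace p N)) [IsProbabilityMeasure μ] [μ.IsAddLeftInvariant]
    (M : ℝ) (hM : 0 < M)
    [MeasurableSpace (Lp ℝ 2 μ × Lp ℝ 2 μ)] [BorelSpace (Lp ℝ 2 μ × Lp ℝ 2 μ)]
    (ν : Measure (Lp ℝ 2 μ × Lp ℝ 2 μ)) [IsFiniteMeasure ν]
    (hν : ∀ᵐ f : Lp ℝ 2 μ × Lp ℝ 2 μ ∂ν, eLpNorm (⇑(f.1)) ⊤ μ ≤ ENNReal.ofReal M ∧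
      eLpNorm (⇑(f.2)) ⊤ μ ≤ ENNReal.ofReal M)
    (a b : Lp ℝ ⊤ μ) (w : Lp ℝ ⊤ (μ.prod μ)) (c d : ℝ)
    (m n : ℕ) (φ : Fin m → Lp ℝ 2 μ) (θ : Fin n → Lp ℝ 2 μ) :
    Summable (fun ij : ℕ × ℕ =>
      |(-1 : ℝ) ^ (ij.1 + ij.2) * c ^ ij.1 * d ^ ij.2 /
          ((Nat.factorial ij.1 : ℝ) * (Nat.factorial ij.2 : ℝ)) *
        ∫ f : Lp ℝ 2 μ × Lp ℝ 2 μ,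
          ((∏ k, ∫ x, φ k x * f.1 x ∂μ) * ∏ l, ∫ x, θ l x * f.2 x ∂μ) *
            (quart μ (⇑(f.1)) ^ ij.1 * quart μ (⇑(f.2)) ^ ij.2 *
              Real.exp (-espin μ (⇑a) (⇑b) (⇑w) (⇑(f.1)) (⇑(f.2)))) ∂ν|) ∧
    iterPD2 (fun st : (Fin m → ℝ) × (Fin n → ℝ) =>
        ∫ f : Lp ℝ 2 μ × Lp ℝ 2 μ,
          Real.exp (-espin μ (⇑a) (⇑b) (⇑w) (⇑(f.1)) (⇑(f.2))
            - c * quart μ (⇑(f.1)) - d * quart μ (⇑(f.2))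
            + (∑ i, st.1 i * ∫ x, φ i x * f.1 x ∂μ)
            + ∑ j, st.2 j * ∫ x, θ j x * f.2 x ∂μ) ∂ν) (0, 0)
      = ∑' ij : ℕ × ℕ,
          (-1 : ℝ) ^ (ij.1 + ij.2) * c ^ ij.1 * d ^ ij.2 /
              ((Nat.factorial ij.1 : ℝ) * (Nat.factorial ij.2 : ℝ)) *
            ∫ f : Lp ℝ 2 μ × Lp ℝ 2 μ,
              ((∏ k, ∫ x, φ k x * f.1 x ∂μ) * ∏ l, ∫ x, θ l x * f.2 x ∂μ) *
                (quart μ (⇑(f.1)) ^ ij.1 * quart μ (⇑(f.2)) ^ ij.2 *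
                  Real.exp (-espin μ (⇑a) (⇑b) (⇑w) (⇑(f.1)) (⇑(f.2)))) ∂ν := by
  classical
  have hM0 : (0:ℝ) ≤ M := hM.le
  have hb : ∀ᵐ f : Lp ℝ 2 μ × Lp ℝ 2 μ ∂ν,
      (∀ᵐ x ∂μ, |f.1 x| ≤ M) ∧ (∀ᵐ x ∂μ, |f.2 x| ≤ M) := by
    filter_upwards [hν] with f hf
    exact ⟨ae_abs_le_of_eLpNorm_top_le hM0 hf.1, ae_abs_le_of_eLpNorm_top_le hM0 hf.2⟩
  -- bound for the linear observables
  set S : ℝ := (∑ k, ∫ x, |φ k x| ∂μ) + ∑ l, ∫ x, |θ l x| ∂μ with hS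
  have hsφ : (0:ℝ) ≤ ∑ k, ∫ x, |φ k x| ∂μ :=
    Finset.sum_nonneg fun k _ => integral_nonneg fun x => abs_nonneg _
  have hsθ : (0:ℝ) ≤ ∑ l, ∫ x, |θ l x| ∂μ :=
    Finset.sum_nonneg fun l _ => integral_nonneg fun x => abs_nonneg _
  have hS0 : 0 ≤ S := add_nonneg hsφ hsθ
  -- measurability of the linear observables
  have hαm : ∀ k : Fin m, AEStronglyMeasurable
      (fun f : Lp ℝ 2 μ × Lp ℝ 2 μ => ∫ x, φ k x * f.1 x ∂μ) ν := by
    intro k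
    have h1 : (fun f : Lp ℝ 2 μ × Lp ℝ 2 μ => ∫ x, φ k x * f.1 x ∂μ)
        = fun f : Lp ℝ 2 μ × Lp ℝ 2 μ => (inner ℝ (φ k) f.1 : ℝ) := by
      funext f
      rw [l2_inner_eq]
    rw [h1]
    exact (continuous_const.inner continuous_fst).aestronglyMeasurable
  have hβm : ∀ l : Fin n, AEStronglyMeasurable
      (fun f : Lp ℝ 2 μ × Lp ℝ 2 μ => ∫ x, θ l x * f.2 x ∂μ) ν := by
    intro l
    have h1 : (fun f : Lp ℝ 2 μ × Lp ℝ 2 μ => ∫ x, θ l x * f.2 x ∂μ)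
        = fun f : Lp ℝ 2 μ × Lp ℝ 2 μ => (inner ℝ (θ l) f.2 : ℝ) := by
      funext f
      rw [l2_inner_eq]
    rw [h1]
    exact (continuous_const.inner continuous_snd).aestronglyMeasurable
  have hα : ∀ᵐ f : Lp ℝ 2 μ × Lp ℝ 2 μ ∂ν, ∀ k : Fin m,
      |∫ x, φ k x * f.1 x ∂μ| ≤ S * M := by
    filter_upwards [hb] with f hf
    intro k
    refine (phi_bound (φ k) hf.1).trans (mul_le_mul_of_nonneg_right ?_ hM0)
    rw [hS]
    have h1 : (∫ x, |φ k x| ∂μ) ≤ ∑ k', ∫ x, |φ k' x| ∂μ :=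
      Finset.single_le_sum (f := fun k' : Fin m => ∫ x, |φ k' x| ∂μ)
        (fun k' _ => integral_nonneg fun x => abs_nonneg _) (Finset.mem_univ k)
    linarith
  have hβ : ∀ᵐ f : Lp ℝ 2 μ × Lp ℝ 2 μ ∂ν, ∀ l : Fin n,
      |∫ x, θ l x * f.2 x ∂μ| ≤ S * M := by
    filter_upwards [hb] with f hf
    intro l
    refine (phi_bound (θ l) hf.2).trans (mul_le_mul_of_nonneg_right ?_ hM0)
    rw [hS]
    have h1 : (∫ x, |θ l x| ∂μ) ≤ ∑ l', ∫ x, |θ l' x| ∂μ :=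
      Finset.single_le_sum (f := fun l' : Fin n => ∫ x, |θ l' x| ∂μ)
        (fun l' _ => integral_nonneg fun x => abs_nonneg _) (Finset.mem_univ l)
    linarith
  -- quartic terms
  have hUb : ∀ᵐ f : Lp ℝ 2 μ × Lp ℝ 2 μ ∂ν, |quart μ (⇑(f.1))| ≤ M ^ 4 := by
    filter_upwards [hb] with f hf
    exact quart_bound f.1 hf.1
  have hVb : ∀ᵐ f : Lp ℝ 2 μ × Lp ℝ 2 μ ∂ν, |quart μ (⇑(f.2))| ≤ M ^ 4 := by
    filter_upwards [hb] with f hf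
    exact quart_bound f.2 hf.2
  have hgUcont : Continuous
      (fun f : Lp ℝ 2 μ × Lp ℝ 2 μ => ∫ x, (Tcl hM0 f.1) x ^ 4 ∂μ) := by
    refine LipschitzWith.continuous (K := ⟨4 * M ^ 3, by positivity⟩)
      (LipschitzWith.of_dist_le_mul fun f g => ?_)
    rw [Real.dist_eq]
    calc |(∫ x, (Tcl hM0 f.1) x ^ 4 ∂μ) - ∫ x, (Tcl hM0 g.1) x ^ 4 ∂μ|
        ≤ 4 * M ^ 3 * ‖Tcl hM0 f.1 - Tcl hM0 g.1‖ :=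
          quart_lip hM0 _ _ (Tcl_bound hM0 f.1) (Tcl_bound hM0 g.1)
      _ = 4 * M ^ 3 * dist (Tcl hM0 f.1) (Tcl hM0 g.1) := by rw [dist_eq_norm]
      _ ≤ 4 * M ^ 3 * dist f.1 g.1 :=
          mul_le_mul_of_nonneg_left (Tcl_dist_le hM0 f.1 g.1) (by positivity)
      _ ≤ 4 * M ^ 3 * dist f g := by
          refine mul_le_mul_of_nonneg_left ?_ (by positivity)
          rw [Prod.dist_eq]
          exact le_max_left _ _
      _ = ↑(⟨4 * M ^ 3, by positivity⟩ : NNReal) * dist f g := rfl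
  have hgVcont : Continuous
      (fun f : Lp ℝ 2 μ × Lp ℝ 2 μ => ∫ x, (Tcl hM0 f.2) x ^ 4 ∂μ) := by
    refine LipschitzWith.continuous (K := ⟨4 * M ^ 3, by positivity⟩)
      (LipschitzWith.of_dist_le_mul fun f g => ?_)
    rw [Real.dist_eq]
    calc |(∫ x, (Tcl hM0 f.2) x ^ 4 ∂μ) - ∫ x, (Tcl hM0 g.2) x ^ 4 ∂μ|
        ≤ 4 * M ^ 3 * ‖Tcl hM0 f.2 - Tcl hM0 g.2‖ :=
          quart_lip hM0 _ _ (Tcl_bound hM0 f.2) (Tcl_bound hM0 g.2)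
      _ = 4 * M ^ 3 * dist (Tcl hM0 f.2) (Tcl hM0 g.2) := by rw [dist_eq_norm]
      _ ≤ 4 * M ^ 3 * dist f.2 g.2 :=
          mul_le_mul_of_nonneg_left (Tcl_dist_le hM0 f.2 g.2) (by positivity)
      _ ≤ 4 * M ^ 3 * dist f g := by
          refine mul_le_mul_of_nonneg_left ?_ (by positivity)
          rw [Prod.dist_eq]
          exact le_max_right _ _
      _ = ↑(⟨4 * M ^ 3, by positivity⟩ : NNReal) * dist f g := rfl
  have hUm : AEStronglyMeasurable
      (fun f : Lp ℝ 2 μ × Lp ℝ 2 μ => quart μ (⇑(f.1))) ν := by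
    refine hgUcont.aestronglyMeasurable.congr ?_
    filter_upwards [hb] with f hf
    show (∫ x, (Tcl hM0 f.1) x ^ 4 ∂μ) = quart μ (⇑(f.1))
    rw [quart]
    refine integral_congr_ae ?_
    filter_upwards [Tcl_eq hM0 f.1 hf.1] with x hx
    rw [hx]
  have hVm : AEStronglyMeasurable
      (fun f : Lp ℝ 2 μ × Lp ℝ 2 μ => quart μ (⇑(f.2))) ν := by
    refine hgVcont.aestronglyMeasurable.congr ?_
    filter_upwards [hb] with f hf
    show (∫ x, (Tcl hM0 f.2) x ^ 4 ∂μ) = quart μ (⇑(f.2))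
    rw [quart]
    refine integral_congr_ae ?_
    filter_upwards [Tcl_eq hM0 f.2 hf.2] with x hx
    rw [hx]
  -- the spin energy
  have hgEcont : Continuous (fun f : Lp ℝ 2 μ × Lp ℝ 2 μ =>
      -(e1f w (Tcl hM0 f.1) (Tcl hM0 f.2)) - (∫ x, a x * (Tcl hM0 f.1) x ∂μ)
        - ∫ x, b x * (Tcl hM0 f.2) x ∂μ) := by
    refine LipschitzWith.continuous
      (K := ⟨(‖w‖ * M + ‖a‖) + (‖w‖ * M + ‖b‖), by positivity⟩)
      (LipschitzWith.of_dist_le_mul fun f g => ?_)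
    rw [Real.dist_eq]
    have key := espin_diff a hM0 b w (Tcl hM0 f.1) (Tcl hM0 g.1) (Tcl hM0 f.2) (Tcl hM0 g.2)
      (Tcl_bound hM0 f.1) (Tcl_bound hM0 g.1) (Tcl_bound hM0 f.2) (Tcl_bound hM0 g.2)
    refine key.trans ?_
    have h1 : ‖Tcl hM0 f.1 - Tcl hM0 g.1‖ ≤ dist f g := by
      rw [← dist_eq_norm]
      refine (Tcl_dist_le hM0 f.1 g.1).trans ?_
      rw [Prod.dist_eq]
      exact le_max_left _ _
    have h2 : ‖Tcl hM0 f.2 - Tcl hM0 g.2‖ ≤ dist f g := by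
      rw [← dist_eq_norm]
      refine (Tcl_dist_le hM0 f.2 g.2).trans ?_
      rw [Prod.dist_eq]
      exact le_max_right _ _
    have hc1 : (0:ℝ) ≤ ‖w‖ * M + ‖a‖ := by positivity
    have hc2 : (0:ℝ) ≤ ‖w‖ * M + ‖b‖ := by positivity
    calc (‖w‖ * M + ‖a‖) * ‖Tcl hM0 f.1 - Tcl hM0 g.1‖
          + (‖w‖ * M + ‖b‖) * ‖Tcl hM0 f.2 - Tcl hM0 g.2‖
        ≤ (‖w‖ * M + ‖a‖) * dist f g + (‖w‖ * M + ‖b‖) * dist f g :=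
          add_le_add (mul_le_mul_of_nonneg_left h1 hc1) (mul_le_mul_of_nonneg_left h2 hc2)
      _ = ((‖w‖ * M + ‖a‖) + (‖w‖ * M + ‖b‖)) * dist f g := by ring
      _ = ↑(⟨(‖w‖ * M + ‖a‖) + (‖w‖ * M + ‖b‖), by positivity⟩ : NNReal) * dist f g := rfl
  have hEsm : AEStronglyMeasurable (fun f : Lp ℝ 2 μ × Lp ℝ 2 μ =>
      espin μ (⇑a) (⇑b) (⇑w) (⇑(f.1)) (⇑(f.2))) ν := by
    refine hgEcont.aestronglyMeasurable.congr ?_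
    filter_upwards [hb] with f hf
    show -(e1f w (Tcl hM0 f.1) (Tcl hM0 f.2)) - (∫ x, a x * (Tcl hM0 f.1) x ∂μ)
        - ∫ x, b x * (Tcl hM0 f.2) x ∂μ
      = espin μ (⇑a) (⇑b) (⇑w) (⇑(f.1)) (⇑(f.2))
    rw [espin]
    exact espin_congr (⇑a) (⇑b) (⇑w) (Tcl_eq hM0 f.1 hf.1) (Tcl_eq hM0 f.2 hf.2)
  have hEsb : ∀ᵐ f : Lp ℝ 2 μ × Lp ℝ 2 μ ∂ν,
      |espin μ (⇑a) (⇑b) (⇑w) (⇑(f.1)) (⇑(f.2))|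
        ≤ M * (‖w‖ * M) + ‖a‖ * M + ‖b‖ * M := by
    filter_upwards [hb] with f hf
    exact espin_abs_bound a b w f.1 f.2 hf.1 hf.2
  set K0 : ℝ := M * (‖w‖ * M) + ‖a‖ * M + ‖b‖ * M with hK0def
  have hK00 : 0 ≤ K0 := by positivity
  -- the full exponent
  have hEm : AEStronglyMeasurable (fun f : Lp ℝ 2 μ × Lp ℝ 2 μ =>
      -espin μ (⇑a) (⇑b) (⇑w) (⇑(f.1)) (⇑(f.2))
        - c * quart μ (⇑(f.1)) - d * quart μ (⇑(f.2))) ν :=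
    (hEsm.neg.sub (hUm.const_mul c)).sub (hVm.const_mul d)
  have hEb : ∀ᵐ f : Lp ℝ 2 μ × Lp ℝ 2 μ ∂ν,
      |-espin μ (⇑a) (⇑b) (⇑w) (⇑(f.1)) (⇑(f.2))
        - c * quart μ (⇑(f.1)) - d * quart μ (⇑(f.2))|
      ≤ K0 + |c| * M ^ 4 + |d| * M ^ 4 := by
    filter_upwards [hEsb, hUb, hVb] with f h1 h2 h3
    have e1 : |(-espin μ (⇑a) (⇑b) (⇑w) (⇑(f.1)) (⇑(f.2)) - c * quart μ (⇑(f.1)))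
          - d * quart μ (⇑(f.2))|
        ≤ |(-espin μ (⇑a) (⇑b) (⇑w) (⇑(f.1)) (⇑(f.2)) - c * quart μ (⇑(f.1)))|
          + |d * quart μ (⇑(f.2))| := abs_sub _ _
    have e2 : |(-espin μ (⇑a) (⇑b) (⇑w) (⇑(f.1)) (⇑(f.2)) - c * quart μ (⇑(f.1)))|
        ≤ |espin μ (⇑a) (⇑b) (⇑w) (⇑(f.1)) (⇑(f.2))| + |c * quart μ (⇑(f.1))| := by
      have := abs_sub (-espin μ (⇑a) (⇑b) (⇑w) (⇑(f.1)) (⇑(f.2))) (c * quart μ (⇑(f.1)))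
      rwa [abs_neg] at this
    have e3 : |c * quart μ (⇑(f.1))| ≤ |c| * M ^ 4 := by
      rw [abs_mul]
      exact mul_le_mul_of_nonneg_left h2 (abs_nonneg _)
    have e4 : |d * quart μ (⇑(f.2))| ≤ |d| * M ^ 4 := by
      rw [abs_mul]
      exact mul_le_mul_of_nonneg_left h3 (abs_nonneg _)
    linarith
  -- derivative step
  have main := iterPD2_integral_exp (ν := ν)
    (fun f : Lp ℝ 2 μ × Lp ℝ 2 μ => -espin μ (⇑a) (⇑b) (⇑w) (⇑(f.1)) (⇑(f.2))
      - c * quart μ (⇑(f.1)) - d * quart μ (⇑(f.2)))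
    (fun k f => ∫ x, φ k x * f.1 x ∂μ) (fun l f => ∫ x, θ l x * f.2 x ∂μ)
    (K0 + |c| * M ^ 4 + |d| * M ^ 4) (S * M) (S * M) hEm hαm hβm hEb hα hβ
  -- series step
  have hPm : AEStronglyMeasurable (fun f : Lp ℝ 2 μ × Lp ℝ 2 μ =>
      (∏ k, ∫ x, φ k x * f.1 x ∂μ) * ∏ l, ∫ x, θ l x * f.2 x ∂μ) ν :=
    (Finset.aestronglyMeasurable_fun_prod _ fun k _ => hαm k).mul
      (Finset.aestronglyMeasurable_fun_prod _ fun l _ => hβm l)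
  have hPb : ∀ᵐ f : Lp ℝ 2 μ × Lp ℝ 2 μ ∂ν,
      |(∏ k, ∫ x, φ k x * f.1 x ∂μ) * ∏ l, ∫ x, θ l x * f.2 x ∂μ|
        ≤ (S * M) ^ m * (S * M) ^ n := by
    filter_upwards [hα, hβ] with f h1 h2
    rw [abs_mul, Finset.abs_prod, Finset.abs_prod]
    have hSM : (0:ℝ) ≤ S * M := mul_nonneg hS0 hM0
    refine mul_le_mul ?_ ?_ (Finset.prod_nonneg fun l _ => abs_nonneg _)
      (pow_nonneg hSM m)
    · calc (∏ k, |∫ x, φ k x * f.1 x ∂μ|) ≤ ∏ _k : Fin m, (S * M) :=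
          Finset.prod_le_prod (fun k _ => abs_nonneg _) (fun k _ => h1 k)
        _ = (S * M) ^ m := by
            rw [Finset.prod_const, Finset.card_univ, Fintype.card_fin]
    · calc (∏ l, |∫ x, θ l x * f.2 x ∂μ|) ≤ ∏ _l : Fin n, (S * M) :=
          Finset.prod_le_prod (fun l _ => abs_nonneg _) (fun l _ => h2 l)
        _ = (S * M) ^ n := by
            rw [Finset.prod_const, Finset.card_univ, Fintype.card_fin]
  have hE0b : ∀ᵐ f : Lp ℝ 2 μ × Lp ℝ 2 μ ∂ν,
      |-espin μ (⇑a) (⇑b) (⇑w) (⇑(f.1)) (⇑(f.2))| ≤ K0 := by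
    filter_upwards [hEsb] with f hf
    rwa [abs_neg]
  have series := integral_exp_series (ν := ν)
    (fun f : Lp ℝ 2 μ × Lp ℝ 2 μ => -espin μ (⇑a) (⇑b) (⇑w) (⇑(f.1)) (⇑(f.2)))
    (fun f => quart μ (⇑(f.1))) (fun f => quart μ (⇑(f.2)))
    (fun f => (∏ k, ∫ x, φ k x * f.1 x ∂μ) * ∏ l, ∫ x, θ l x * f.2 x ∂μ)
    c d K0 (M ^ 4) ((S * M) ^ m * (S * M) ^ n)
    hEsm.neg hUm hVm hPm hK00 (by positivity)
    (mul_nonneg (pow_nonneg (mul_nonneg hS0 hM0) m) (pow_nonneg (mul_nonneg hS0 hM0) n))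
    hE0b hUb hVb hPb
  exact ⟨series.1, main.trans series.2⟩
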